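/- For 0<|q|<1 and parameters A_1,...,A_L, B_1,...,B_L with A_1⋯A_L = B_1⋯B_L (and no denominator vanishing), the limit as k → ∞ of ∏_{i=1}^L (A_i q^{-k};q)_k / (B_i q^{-k};q)_k equals ∏_{i=1}^L (q/A_i;q)_∞ / (q/B_i;q)_∞. -/

import Mathlib

open Filter

noncomputable def qp (q a : ℂ) (n : ℕ) : ℂ := ∏ i ∈ Finset.range n, (1 - a * q ^ i)

noncomputable def qpInf (q a : ℂ) : ℂ := ∏' i : ℕ, (1 - a * q ^ i)

lemma log_summable {q a : ℂ} (hq1 : ‖q‖ < 1) :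
    Summable fun n : ℕ => Complex.log (1 - a * q ^ n) := by
  have hgeo : Summable fun n : ℕ => (3/2) * (‖a‖ * ‖q‖ ^ n) :=
    ((summable_geometric_of_lt_one (norm_nonneg q) hq1).mul_left _).mul_left _
  apply Summable.of_norm_bounded_eventually_nat hgeo
  have htend : Tendsto (fun n : ℕ => ‖a‖ * ‖q‖ ^ n) atTop (nhds 0) := by
    simpa using (tendsto_pow_atTop_nhds_zero_of_lt_one (norm_nonneg q) hq1).const_mul
      (‖a‖)
  filter_upwards [htend.eventually_le_const (by norm_num : (0:ℝ) < 1/2)] with n hn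
  have hz : ‖-(a * q ^ n)‖ ≤ 1/2 := by
    simpa [map_mul, map_pow] using hn
  have := Complex.norm_log_one_add_half_le_self hz
  simpa [sub_eq_add_neg, map_mul, map_pow, mul_comm] using this

lemma qp_multipliable {q a : ℂ} (hq1 : ‖q‖ < 1)
    (hfac : ∀ m : ℕ, 1 - a * q ^ m ≠ 0) :
    Multipliable fun n : ℕ => 1 - a * q ^ n := by
  exact Complex.multipliable_of_summable_log (log_summable hq1)

lemma qp_tendsto {q a : ℂ} (hq1 : ‖q‖ < 1)
    (hfac : ∀ m : ℕ, 1 - a * q ^ m ≠ 0) :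
    Tendsto (fun k : ℕ => qp q a k) atTop (nhds (qpInf q a)) :=
  (qp_multipliable hq1 hfac).hasProd.tendsto_prod_nat

lemma qpInf_ne_zero {q a : ℂ} (hq1 : ‖q‖ < 1)
    (hfac : ∀ m : ℕ, 1 - a * q ^ m ≠ 0) : qpInf q a ≠ 0 := by
  have h := Complex.cexp_tsum_eq_tprod (f := fun n => 1 - a * q ^ n) hfac (log_summable hq1)
  rw [qpInf, ← h]
  exact Complex.exp_ne_zero _

lemma qp_factor_ne_zero {q a : ℂ} (ha : a ≠ 0) (haq : ∀ m : ℕ, a ≠ q ^ (m + 1)) (m : ℕ) :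
    1 - (q / a) * q ^ m ≠ 0 := by
  intro h
  apply haq m
  have : (q / a) * q ^ m = 1 := by linear_combination -h
  field_simp at this
  rw [← this]
  ring

lemma qp_shift {q a : ℂ} (hq : q ≠ 0) (ha : a ≠ 0) (k : ℕ) :
    qp q (a * (q ^ k)⁻¹) k
      = ((-a) ^ k * ∏ j ∈ Finset.range k, (q ^ (j + 1))⁻¹) * qp q (q / a) k := by
  unfold qp
  rw [← Finset.prod_range_reflect (fun i => 1 - a * (q ^ k)⁻¹ * q ^ i) k]
  have hcong : ∀ j ∈ Finset.range k, (1 - a * (q ^ k)⁻¹ * q ^ (k - 1 - j))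
      = (-a) * (q ^ (j + 1))⁻¹ * (1 - (q / a) * q ^ j) := by
    intro j hj
    rw [Finset.mem_range] at hj
    have hpow : q ^ (k - 1 - j) * q ^ (j + 1) = q ^ k := by
      rw [← pow_add]
      congr 1
      omega
    have hq1 : q ^ (j + 1) ≠ 0 := pow_ne_zero _ hq
    have hqk : q ^ k ≠ 0 := pow_ne_zero _ hq
    have e1 : q ^ (k - 1 - j) = q ^ k * (q ^ (j + 1))⁻¹ := by
      field_simp
      exact hpow
    rw [e1]
    field_simp
    ring
  rw [Finset.prod_congr rfl hcong, Finset.prod_mul_distrib, Finset.prod_mul_distrib,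
    Finset.prod_const, Finset.card_range, mul_assoc]

theorem stmt3 (q : ℂ) (hq0 : 0 < ‖q‖) (hq1 : ‖q‖ < 1)
    (L : ℕ) (A B : Fin L → ℂ) (hA : ∀ i, A i ≠ 0) (hB : ∀ i, B i ≠ 0)
    (hprod : ∏ i, A i = ∏ i, B i)
    (hAq : ∀ i (m : ℕ), A i ≠ q ^ (m + 1)) (hBq : ∀ i (m : ℕ), B i ≠ q ^ (m + 1)) :
    Tendsto (fun k : ℕ => ∏ i, qp q (A i * (q ^ k)⁻¹) k / qp q (B i * (q ^ k)⁻¹) k)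
      atTop (nhds (∏ i, qpInf q (q / A i) / qpInf q (q / B i))) := by
  have hq : q ≠ 0 := by
    intro h; rw [h] at hq0; simp at hq0
  have hAfac : ∀ i (m : ℕ), 1 - (q / A i) * q ^ m ≠ 0 :=
    fun i => qp_factor_ne_zero (hA i) (hAq i)
  have hBfac : ∀ i (m : ℕ), 1 - (q / B i) * q ^ m ≠ 0 :=
    fun i => qp_factor_ne_zero (hB i) (hBq i)
  have hqpB : ∀ i k, qp q (q / B i) k ≠ 0 := by
    intro i k
    unfold qp
    exact Finset.prod_ne_zero_iff.mpr (fun m _ => hBfac i m)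
  have key : ∀ k : ℕ, (∏ i, qp q (A i * (q ^ k)⁻¹) k / qp q (B i * (q ^ k)⁻¹) k)
      = ∏ i, qp q (q / A i) k / qp q (q / B i) k := by
    intro k
    set P : ℂ := ∏ j ∈ Finset.range k, (q ^ (j + 1))⁻¹ with hP
    have hPne : P ≠ 0 :=
      Finset.prod_ne_zero_iff.mpr (fun j _ => inv_ne_zero (pow_ne_zero _ hq))
    have step : ∀ i, qp q (A i * (q ^ k)⁻¹) k / qp q (B i * (q ^ k)⁻¹) k
        = (A i / B i) ^ k * (qp q (q / A i) k / qp q (q / B i) k) := by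
      intro i
      rw [qp_shift hq (hA i), qp_shift hq (hB i)]
      have hBk : (-B i) ^ k ≠ 0 := pow_ne_zero _ (neg_ne_zero.mpr (hB i))
      have hb := hqpB i k
      have hrhs : (A i / B i) ^ k * (qp q (q / A i) k / qp q (q / B i) k)
          = (A i ^ k * qp q (q / A i) k) / (B i ^ k * qp q (q / B i) k) := by
        rw [div_pow, div_mul_div_comm]
      rw [hrhs, div_eq_div_iff (mul_ne_zero (mul_ne_zero hBk hPne) hb)
        (mul_ne_zero (pow_ne_zero _ (hB i)) hb)]
      ring
    simp_rw [step]
    rw [Finset.prod_mul_distrib, Finset.prod_pow, Finset.prod_div_distrib, hprod,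
      div_self (Finset.prod_ne_zero_iff.mpr (fun i _ => hB i)), one_pow, one_mul]
  rw [show (fun k : ℕ => ∏ i, qp q (A i * (q ^ k)⁻¹) k / qp q (B i * (q ^ k)⁻¹) k)
      = fun k => ∏ i, qp q (q / A i) k / qp q (q / B i) k from funext key]
  apply tendsto_finset_prod
  intro i _
  exact (qp_tendsto hq1 (hAfac i)).div (qp_tendsto hq1 (hBfac i))
    (qpInf_ne_zero hq1 (hBfac i))
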